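/- Let (x_n) be a sequence in [0,1), k ≥ 2, β ∈ (0,1], s_1,...,s_{k-1} > 0, and N ≥ k with max_l s_l/(2N^β) ≤ 1/4. Then ∫_{[0,1]^{k-1}} G_β · H_β dt_1⋯dt_{k-1} equals N^{-(k-2(k-1)β)} times [ ∑ over distinct k-tuples (i_1,...,i_k) of ∏_{l=1}^{k-1} max(0, s_l/N^β − ‖x_{i_l} − x_{i_k}‖) + ∑ over distinct (k−1)-tuples (i_1,...,i_{k-1}) ∑_{j=1}^{k-1} (s_j/N^β) ∏_{l ≠ j} max(0, s_l/N^β − ‖x_{i_j} − x_{i_l}‖) ]. -/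

import Mathlib

open MeasureTheory Filter
open scoped Classical

/-- Distance of a real number to the nearest integer. -/
noncomputable def nid (x : ℝ) : ℝ := |x - round x|

lemma nid_nonneg (x : ℝ) : 0 ≤ nid x := abs_nonneg _

lemma nid_eq_min (x : ℝ) : nid x = min (Int.fract x) (1 - Int.fract x) :=
  abs_sub_round_eq_min x

lemma nid_zero : nid 0 = 0 := by simp [nid]

lemma nid_add_int (x : ℝ) (n : ℤ) : nid (x + n) = nid x := by
  simp [nid_eq_min, Int.fract_add_intCast]

lemma nid_neg (x : ℝ) : nid (-x) = nid x := by
  rcases eq_or_ne (Int.fract x) 0 with h | h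
  · rw [nid_eq_min, nid_eq_min, h, Int.fract_neg_eq_zero.2 h]
  · rw [nid_eq_min, nid_eq_min, Int.fract_neg h]
    simp [min_comm]

lemma nid_sub_comm (x y : ℝ) : nid (x - y) = nid (y - x) := by
  rw [← nid_neg (x - y)]; ring_nf

lemma nid_eq_abs {x : ℝ} (h : |x| ≤ 1/2) : nid x = |x| := by
  rcases abs_le.1 h with ⟨h1, h2⟩
  rcases lt_or_ge x (1/2) with h3 | h3
  · have : round x = 0 := by
      rw [round_eq, Int.floor_eq_zero_iff]
      constructor <;> simp <;> linarith
    simp [nid, this]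
  · have hx : x = 1/2 := le_antisymm h2 h3
    have : round x = 1 := by
      rw [hx]; norm_num [round_eq]
    rw [nid, this, hx]
    norm_num

lemma nid_le_half (x : ℝ) : nid x ≤ 1/2 := abs_sub_round x

lemma nid_cases {x ε : ℝ} (h : nid x ≤ ε) : |x| ≤ ε ∨ 1 - ε ≤ |x| := by
  rcases eq_or_ne (round x) 0 with h0 | h0
  · left; simpa [nid, h0] using h
  · right
    have h1 : (1:ℝ) ≤ |(round x : ℝ)| := by
      rw [← Int.cast_abs]
      exact_mod_cast Int.one_le_abs (by simpa using h0)
    have := abs_sub_abs_le_abs_sub (round x : ℝ) x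
    have h2 : |(round x:ℝ) - x| ≤ ε := by rw [abs_sub_comm]; exact h
    linarith

lemma measurable_nid : Measurable nid := by
  have : nid = fun x => min (Int.fract x) (1 - Int.fract x) := funext nid_eq_min
  rw [this]
  exact measurable_fract.min (measurable_const.sub measurable_fract)

lemma key1d (ε u v : ℝ) (hε0 : 0 < ε) (hε : ε ≤ 1/4) :
    volume (Set.Icc (0:ℝ) 1 ∩ {t | nid (u - t) ≤ ε ∧ nid (v - t) ≤ ε})
      = ENNReal.ofReal (max 0 (2*ε - nid (u - v))) := by
  set T : Set ℝ := {t | nid (u - t) ≤ ε ∧ nid (v - t) ≤ ε} with hTdef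
  have hT : MeasurableSet T := by
    apply MeasurableSet.inter
    · exact measurableSet_le (measurable_nid.comp (measurable_const.sub measurable_id))
        measurable_const
    · exact measurableSet_le (measurable_nid.comp (measurable_const.sub measurable_id))
        measurable_const
  have hinv : ∀ g : AddSubgroup.zmultiples (1:ℝ), (fun x => g +ᵥ x) ⁻¹' T = T := by
    rintro ⟨g, hg⟩
    rw [AddSubgroup.mem_zmultiples_iff] at hg
    obtain ⟨n, rfl⟩ := hg
    ext t
    have h1 : u - (n • (1:ℝ) + t) = (u - t) + (-n : ℤ) := by
      simp only [zsmul_eq_mul, mul_one]; push_cast; ring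
    have h2 : v - (n • (1:ℝ) + t) = (v - t) + (-n : ℤ) := by
      simp only [zsmul_eq_mul, mul_one]; push_cast; ring
    simp only [Set.mem_preimage, hTdef, Set.mem_setOf_eq, AddSubgroup.vadd_def,
      vadd_eq_add, h1, h2, nid_add_int]
  -- step 1 : Icc → Ioc
  have step1 : volume (Set.Icc (0:ℝ) 1 ∩ T) = volume (T ∩ Set.Ioc 0 (0 + 1)) := by
    rw [Set.inter_comm]
    apply le_antisymm
    · calc volume (T ∩ Set.Icc (0:ℝ) 1) ≤ volume ((T ∩ Set.Ioc 0 (0+1)) ∪ {0}) := by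
            apply measure_mono
            rintro t ⟨ht, h0, h1⟩
            rcases eq_or_lt_of_le h0 with h | h
            · exact Or.inr (by simp [← h])
            · exact Or.inl ⟨ht, h, by linarith⟩
        _ ≤ volume (T ∩ Set.Ioc 0 (0+1)) + volume {0} := measure_union_le _ _
        _ = volume (T ∩ Set.Ioc 0 (0+1)) := by simp
    · apply measure_mono
      rintro t ⟨ht, h0, h1⟩
      exact ⟨ht, le_of_lt h0, by linarith⟩
  -- step 2 : move window
  have step2 : volume (T ∩ Set.Ioc 0 (0 + 1))
      = volume (T ∩ Set.Ioc (u - 1/2) (u - 1/2 + 1)) :=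
    (isAddFundamentalDomain_Ioc one_pos 0).measure_set_eq
      (isAddFundamentalDomain_Ioc one_pos (u - 1/2)) hT hinv
  set n : ℤ := round (u - v) with hn
  set w : ℝ := u - v - n with hw
  have hwabs : |w| ≤ 1/2 := abs_sub_round (u - v)
  have hnidw : nid (u - v) = |w| := rfl
  set A : ℝ := u + max (-ε) (-w - ε) with hA
  set B : ℝ := u + min ε (-w + ε) with hB
  -- step 3 : window ∩ T a.e. equals Icc A B
  have step3 : volume (T ∩ Set.Ioc (u - 1/2) (u - 1/2 + 1)) = volume (Set.Icc A B) := by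
    apply le_antisymm
    · calc volume (T ∩ Set.Ioc (u - 1/2) (u - 1/2 + 1))
          ≤ volume (Set.Icc A B ∪ {u - ε, u + ε}) := by
            apply measure_mono
            rintro t ⟨⟨hc1, hc2⟩, htl, htr⟩
            have hsb : |t - u| ≤ 1/2 := by rw [abs_le]; constructor <;> linarith
            have h1 : |t - u| ≤ ε := by
              rw [← nid_eq_abs hsb, ← nid_sub_comm]; exact hc1
            have htv : v - t = -((t - u + w) + (n:ℝ)) := by rw [hw]; ring
            have hc2' : nid (t - u + w) ≤ ε := by
              rw [← nid_add_int (t - u + w) n, ← nid_neg, ← htv]; exact hc2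
            rcases nid_cases hc2' with h2 | h2
            · left
              rw [Set.mem_Icc, hA, hB]
              rcases abs_le.1 h1 with ⟨h1a, h1b⟩
              rcases abs_le.1 h2 with ⟨h2a, h2b⟩
              constructor
              · have : max (-ε) (-w - ε) ≤ t - u := max_le (by linarith) (by linarith)
                linarith
              · have : t - u ≤ min ε (-w + ε) := le_min (by linarith) (by linarith)
                linarith
            · -- boundary case : forces |t-u| = ε
              right
              have hup : |t - u + w| ≤ ε + 1/2 := by
                calc |t - u + w| ≤ |t - u| + |w| := abs_add_le _ _
                  _ ≤ ε + 1/2 := add_le_add h1 hwabs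
              have hε4 : ε = 1/4 := by linarith
              have habs : |t - u| = ε := by
                have := abs_add_le (t - u) w
                have : 1 - ε ≤ |t - u| + |w| := le_trans h2 this
                linarith
              simp only [Set.mem_insert_iff, Set.mem_singleton_iff]
              rcases abs_eq (le_of_lt hε0) |>.1 habs with h | h
              · right; linarith
              · left; linarith
        _ ≤ volume (Set.Icc A B) + volume ({u - ε, u + ε} : Set ℝ) := measure_union_le _ _
        _ = volume (Set.Icc A B) := by
            rw [(Set.toFinite ({u - ε, u + ε} : Set ℝ)).measure_zero volume, add_zero]
    · apply measure_mono
      rintro t ⟨htA, htB⟩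
      rw [hA] at htA; rw [hB] at htB
      have h1 : |t - u| ≤ ε := by
        rw [abs_le]
        constructor
        · have := le_trans (le_max_left (-ε) (-w - ε)) (by linarith : max (-ε) (-w-ε) ≤ t - u)
          linarith
        · have := le_trans (by linarith : t - u ≤ min ε (-w + ε)) (min_le_left _ _)
          linarith
      have h2 : |t - u + w| ≤ ε := by
        rw [abs_le]
        constructor
        · have := le_trans (le_max_right (-ε) (-w - ε)) (by linarith : max (-ε) (-w-ε) ≤ t - u)
          linarith
        · have := le_trans (by linarith : t - u ≤ min ε (-w + ε)) (min_le_right _ _)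
          linarith
      refine ⟨⟨?_, ?_⟩, ?_, ?_⟩
      · rw [nid_sub_comm, nid_eq_abs (le_trans h1 (by linarith))]; exact h1
      · have htv : v - t = -((t - u + w) + (n:ℝ)) := by rw [hw]; ring
        rw [htv, nid_neg, nid_add_int, nid_eq_abs (le_trans h2 (by linarith))]
        exact h2
      · rcases abs_le.1 h1 with ⟨ha, _⟩; linarith
      · rcases abs_le.1 h1 with ⟨_, hb⟩; linarith
  have hBA : B - A = 2*ε - |w| := by
    rcases le_or_gt 0 w with hw0 | hw0
    · rw [hB, hA, abs_of_nonneg hw0, min_eq_right (by linarith), max_eq_left (by linarith)]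
      ring
    · rw [hB, hA, abs_of_neg hw0, min_eq_left (by linarith), max_eq_right (by linarith)]
      ring
  rw [step1, step2, step3, Real.volume_Icc, hnidw, hBA]
  rcases le_or_gt (2*ε - |w|) 0 with h | h
  · rw [max_eq_left h, ENNReal.ofReal_of_nonpos h, ENNReal.ofReal_zero]
  · rw [max_eq_right (le_of_lt h)]


lemma snoc_inj {m N : ℕ} {i : Fin m → Fin N} (hi : Function.Injective i) {j : Fin N}
    (hj : ∀ l, i l ≠ j) : Function.Injective (Fin.snoc i j : Fin (m+1) → Fin N) := by
  intro a b h
  rcases Fin.eq_castSucc_or_eq_last a with ⟨a', rfl⟩ | rfl <;>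
    rcases Fin.eq_castSucc_or_eq_last b with ⟨b', rfl⟩ | rfl
  · rw [Fin.snoc_castSucc, Fin.snoc_castSucc] at h
    exact congrArg Fin.castSucc (hi h)
  · rw [Fin.snoc_castSucc, Fin.snoc_last] at h
    exact absurd h (hj a')
  · rw [Fin.snoc_castSucc, Fin.snoc_last] at h
    exact absurd h.symm (hj b')
  · rfl

lemma comb (x : ℕ → ℝ) (m N : ℕ) (g : Fin m → ℝ) (hg : ∀ l, 0 ≤ g l) :
    ∑ i ∈ Finset.univ.filter (fun i : Fin m → Fin N => Function.Injective i),
      ∑ j ∈ Finset.range N, ∏ l, max 0 (g l - nid (x (i l) - x j))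
    = (∑ i ∈ Finset.univ.filter (fun i : Fin (m+1) → Fin N => Function.Injective i),
        ∏ l : Fin m, max 0 (g l - nid (x (i l.castSucc) - x (i (Fin.last m)))))
      + ∑ i ∈ Finset.univ.filter (fun i : Fin m → Fin N => Function.Injective i),
          ∑ j : Fin m, g j * ∏ l ∈ Finset.univ.erase j,
            max 0 (g l - nid (x (i j) - x (i l))) := by
  classical
  have hsplit : ∀ i : Fin m → Fin N, Function.Injective i →
      ∑ j ∈ Finset.range N, (∏ l, max 0 (g l - nid (x (i l) - x j)))
      = (∑ j ∈ Finset.univ \ Finset.image i Finset.univ,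
          ∏ l, max 0 (g l - nid (x (i l) - x (j : Fin N))))
        + ∑ j : Fin m, g j * ∏ l ∈ Finset.univ.erase j,
            max 0 (g l - nid (x (i j) - x (i l))) := by
    intro i hi
    rw [← Fin.sum_univ_eq_sum_range (fun j => ∏ l, max 0 (g l - nid (x (i l) - x j))) N]
    rw [← Finset.sum_sdiff (Finset.subset_univ (Finset.image i Finset.univ))]
    congr 1
    rw [Finset.sum_image (fun a _ b _ h => hi h)]
    refine Finset.sum_congr rfl fun j₀ _ => ?_
    rw [← Finset.mul_prod_erase Finset.univ _ (Finset.mem_univ j₀)]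
    congr 1
    · rw [sub_self, nid_zero, sub_zero, max_eq_right (hg j₀)]
    · exact Finset.prod_congr rfl fun l _ => by rw [nid_sub_comm]
  rw [Finset.sum_congr rfl fun i hi => hsplit i (Finset.mem_filter.1 hi).2,
    Finset.sum_add_distrib]
  congr 1
  rw [Finset.sum_sigma']
  refine Finset.sum_nbij' (fun p => Fin.snoc p.1 p.2) (fun f => ⟨Fin.init f, f (Fin.last m)⟩)
    ?_ ?_ ?_ ?_ ?_
  · rintro ⟨i, j⟩ hp
    rw [Finset.mem_sigma, Finset.mem_filter, Finset.mem_sdiff] at hp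
    obtain ⟨⟨_, hi⟩, _, hj⟩ := hp
    rw [Finset.mem_filter]
    refine ⟨Finset.mem_univ _, snoc_inj hi fun l hl => hj ?_⟩
    rw [Finset.mem_image]
    exact ⟨l, Finset.mem_univ _, hl⟩
  · intro f hf
    rw [Finset.mem_filter] at hf
    rw [Finset.mem_sigma, Finset.mem_filter, Finset.mem_sdiff]
    refine ⟨⟨Finset.mem_univ _, hf.2.comp (Fin.castSucc_injective m)⟩, Finset.mem_univ _, ?_⟩
    rw [Finset.mem_image]
    rintro ⟨l, -, hl⟩
    exact absurd (hf.2 hl) (Fin.ne_last_of_lt (Fin.castSucc_lt_last l))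
  · rintro ⟨i, j⟩ -
    simp [Fin.init_snoc, Fin.snoc_last]
  · intro f _
    exact Fin.snoc_init_self f
  · rintro ⟨i, j⟩ -
    exact Finset.prod_congr rfl fun l _ => by
      simp only [Fin.snoc_castSucc, Fin.snoc_last]


/-- `G_β(s_1,…,s_{k-1},t_1,…,t_{k-1},N)` with `k = m+1`:
`N^{-(k-1-(k-1)β)}·#{distinct (i_1,…,i_{k-1}), i_j ≤ N : ‖x_{i_l} - t_l‖ ≤ s_l/(2N^β) ∀ l}`. -/
noncomputable def Gfun (x : ℕ → ℝ) (m : ℕ) (β : ℝ) (s : Fin m → ℝ) (t : Fin m → ℝ)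
    (N : ℕ) : ℝ :=
  ((Finset.univ.filter (fun i : Fin m → Fin N =>
      Function.Injective i ∧
        ∀ l : Fin m, nid (x (i l) - t l) ≤ s l / (2 * (N : ℝ) ^ β))).card : ℝ)
    / (N : ℝ) ^ ((m : ℝ) - m * β)

/-- `H_β(s_1,…,s_{k-1},t_1,…,t_{k-1},N)` with `k = m+1`:
`N^{-(1-(k-1)β)}·#{i ≤ N : ‖x_i - t_l‖ ≤ s_l/(2N^β) ∀ l}`. -/
noncomputable def Hfun (x : ℕ → ℝ) (m : ℕ) (β : ℝ) (s : Fin m → ℝ) (t : Fin m → ℝ)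
    (N : ℕ) : ℝ :=
  (((Finset.range N).filter (fun i =>
      ∀ l : Fin m, nid (x i - t l) ≤ s l / (2 * (N : ℝ) ^ β))).card : ℝ)
    / (N : ℝ) ^ ((1 : ℝ) - m * β)

/-- `∫_{[0,1]^{k-1}} G_β·H_β dt` equals `N^{-(k-2(k-1)β)}` times the sum of
the two correlation sums described in the paper. -/
theorem stmt15 (x : ℕ → ℝ) (hx : ∀ n, x n ∈ Set.Ico (0 : ℝ) 1) (m : ℕ) (hm : 1 ≤ m)
    (β : ℝ) (hβ : 0 < β) (hβ1 : β ≤ 1) (s : Fin m → ℝ) (hs : ∀ i, 0 < s i)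
    (N : ℕ) (hN : m + 1 ≤ N) (hsmall : ∀ l, s l / (2 * (N : ℝ) ^ β) ≤ 1 / 4) :
    (∫ t in Set.univ.pi fun _ : Fin m => Set.Icc (0 : ℝ) 1,
        Gfun x m β s t N * Hfun x m β s t N)
      = ((∑ i ∈ Finset.univ.filter (fun i : Fin (m + 1) → Fin N => Function.Injective i),
            ∏ l : Fin m,
              max 0 (s l / (N : ℝ) ^ β - nid (x (i l.castSucc) - x (i (Fin.last m)))))
          + ∑ i ∈ Finset.univ.filter (fun i : Fin m → Fin N => Function.Injective i),
              ∑ j : Fin m, (s j / (N : ℝ) ^ β) *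
                ∏ l ∈ Finset.univ.erase j,
                  max 0 (s l / (N : ℝ) ^ β - nid (x (i j) - x (i l))))
        / (N : ℝ) ^ ((m + 1 : ℝ) - 2 * m * β) := by
  classical
  have hN0 : (0:ℝ) < (N:ℝ) := by
    have : 0 < N := by omega
    exact_mod_cast this
  have hNb : (0:ℝ) < (N:ℝ)^β := Real.rpow_pos_of_pos hN0 β
  set S : (Fin m → Fin N) → ℕ → Fin m → Set ℝ := fun i j l =>
    {τ : ℝ | nid (x (i l) - τ) ≤ s l / (2*(N:ℝ)^β) ∧ nid (x j - τ) ≤ s l / (2*(N:ℝ)^β)}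
    with hSdef
  have hSmeas : ∀ i j l, MeasurableSet (S i j l) := by
    intro i j l
    exact (measurableSet_le (measurable_nid.comp (measurable_const.sub measurable_id))
        measurable_const).inter
      (measurableSet_le (measurable_nid.comp (measurable_const.sub measurable_id))
        measurable_const)
  have hpimeas : ∀ i j, MeasurableSet (Set.univ.pi (S i j)) := fun i j =>
    MeasurableSet.univ_pi (hSmeas i j)
  have hpoint : ∀ t : Fin m → ℝ, Gfun x m β s t N * Hfun x m β s t N
      = (∑ i ∈ Finset.univ.filter (fun i : Fin m → Fin N => Function.Injective i),
          ∑ j ∈ Finset.range N, (Set.univ.pi (S i j)).indicator (fun _ => (1:ℝ)) t)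
        / ((N:ℝ)^((m:ℝ) - m*β) * (N:ℝ)^((1:ℝ) - m*β)) := by
    intro t
    simp only [Gfun, Hfun]
    rw [div_mul_div_comm]
    congr 1
    rw [← Finset.filter_filter, Finset.card_filter, Finset.card_filter]
    push_cast
    rw [Finset.sum_mul_sum]
    refine Finset.sum_congr rfl fun i _ => Finset.sum_congr rfl fun j hj => ?_
    have hmem : t ∈ Set.univ.pi (S i j) ↔
        (∀ l, nid (x (i l) - t l) ≤ s l / (2*(N:ℝ)^β)) ∧
        (∀ l, nid (x j - t l) ≤ s l / (2*(N:ℝ)^β)) := by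
      simp only [Set.mem_univ_pi, hSdef, Set.mem_setOf_eq, forall_and]
    rw [Set.indicator_apply]
    by_cases h1 : ∀ l, nid (x (i l) - t l) ≤ s l / (2*(N:ℝ)^β) <;>
      by_cases h2 : ∀ l, nid (x j - t l) ≤ s l / (2*(N:ℝ)^β) <;>
      simp [hmem, h1, h2]
  have hvolIcc : volume (Set.univ.pi fun _ : Fin m => Set.Icc (0:ℝ) 1) < ⊤ := by
    rw [volume_pi_pi]
    simp [Real.volume_Icc]
  have hintg : ∀ i j, Integrable ((Set.univ.pi (S i j)).indicator (fun _ => (1:ℝ)))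
      (volume.restrict (Set.univ.pi fun _ : Fin m => Set.Icc (0:ℝ) 1)) := by
    intro i j
    rw [integrable_indicator_iff (hpimeas i j)]
    refine integrableOn_const (ne_of_lt ?_) (by simp)
    rw [Measure.restrict_apply (hpimeas i j)]
    exact lt_of_le_of_lt (measure_mono Set.inter_subset_right) hvolIcc
  have hval : ∀ (i : Fin m → Fin N) (j : ℕ),
      (∫ t in Set.univ.pi fun _ : Fin m => Set.Icc (0:ℝ) 1,
        (Set.univ.pi (S i j)).indicator (fun _ => (1:ℝ)) t)
      = ∏ l, max 0 (s l / (N:ℝ)^β - nid (x (i l) - x j)) := by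
    intro i j
    rw [setIntegral_indicator (hpimeas i j), setIntegral_const, smul_eq_mul, mul_one]
    have hinter : (Set.univ.pi fun _ : Fin m => Set.Icc (0:ℝ) 1) ∩ Set.univ.pi (S i j)
        = Set.univ.pi fun l => Set.Icc (0:ℝ) 1 ∩ S i j l := (Set.pi_inter_distrib).symm
    rw [hinter, measureReal_def, volume_pi_pi]
    have hkey : ∀ l, volume (Set.Icc (0:ℝ) 1 ∩ S i j l)
        = ENNReal.ofReal (max 0 (2 * (s l / (2*(N:ℝ)^β)) - nid (x (i l) - x j))) :=
      fun l => key1d _ _ _ (div_pos (hs l) (by positivity)) (hsmall l)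
    simp_rw [hkey]
    rw [ENNReal.toReal_prod]
    refine Finset.prod_congr rfl fun l _ => ?_
    rw [ENNReal.toReal_ofReal (le_max_left 0 _)]
    have : 2 * (s l / (2*(N:ℝ)^β)) = s l / (N:ℝ)^β := by
      field_simp
    rw [this]
  simp_rw [hpoint]
  rw [integral_div]
  rw [integral_finset_sum _ (fun i _ => integrable_finset_sum _ (fun j _ => hintg i j))]
  have hinner : ∀ i : Fin m → Fin N,
      (∫ t in Set.univ.pi fun _ : Fin m => Set.Icc (0:ℝ) 1,
        ∑ j ∈ Finset.range N, (Set.univ.pi (S i j)).indicator (fun _ => (1:ℝ)) t)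
      = ∑ j ∈ Finset.range N, ∏ l, max 0 (s l / (N:ℝ)^β - nid (x (i l) - x j)) := by
    intro i
    rw [integral_finset_sum _ (fun j _ => hintg i j)]
    exact Finset.sum_congr rfl fun j _ => hval i j
  simp_rw [hinner]
  rw [comb x m N (fun l => s l / (N:ℝ)^β) (fun l => div_nonneg (hs l).le hNb.le)]
  rw [← Real.rpow_add hN0]
  congr 2
  push_cast
  ring
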